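/- Let R be a commutative ring and M a finitely generated projective R-module. If for every ring homomorphism from R to a field k the k-vector space M ⊗_R k has dimension 1, then M is an invertible R-module: the evaluation map M ⊗_R Hom_R(M, R) → R is an isomorphism. -/

import Mathlib

open TensorProduct

universe u v

/-- Key lemma: for a rank-one (at all residue fields) f.g. projective module,
`f x • y = f y • x`. -/
lemma line_bundle_key {R : Type u} {M : Type v} [CommRing R]
    [AddCommGroup M] [Module R M] [Module.Finite R M] [Module.Projective R M]
    (h : ∀ (k : Type u) [Field k] [Algebra R k], Module.finrank k (k ⊗[R] M) = 1)
    (f : Module.Dual R M) (x y : M) : f x • y = f y • x := by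
  have hfp : Module.FinitePresentation R M := Module.finitePresentation_of_projective R M
  apply Module.eq_of_localization_maximal (R := R)
    (Mₚ := fun P _ => LocalizedModule P.primeCompl M)
    (f := fun P _ => LocalizedModule.mkLinearMap P.primeCompl M)
  intro P hP
  set Rp := Localization.AtPrime P
  set Mp := LocalizedModule P.primeCompl M
  letI k := IsLocalRing.ResidueField Rp
  have hb : IsBaseChange Rp (LocalizedModule.mkLinearMap P.primeCompl M) :=
    IsLocalizedModule.isBaseChange P.primeCompl Rp _
  have hbk : IsBaseChange k (TensorProduct.mk Rp k Mp 1) := TensorProduct.isBaseChange Rp Mp k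
  have hcomp : IsBaseChange k (((TensorProduct.mk Rp k Mp 1).restrictScalars R).comp
      (LocalizedModule.mkLinearMap P.primeCompl M)) := hb.comp hbk
  have hfree : Module.Free Rp Mp := Module.free_of_flat_of_isLocalRing
  have hrank : Module.finrank Rp Mp = 1 := by
    have h1 : Module.finrank k (k ⊗[Rp] Mp) = Module.finrank Rp Mp :=
      Module.finrank_baseChange
    have h2 : Module.finrank k (k ⊗[R] M) = Module.finrank k (k ⊗[Rp] Mp) :=
      hcomp.equiv.finrank_eq
    rw [← h1, ← h2, h k]
  have b : Module.Basis (Fin 1) Rp Mp := Module.finBasisOfFinrankEq Rp Mp hrank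
  -- localized functional
  set fp : Mp →ₗ[Rp] Rp := hb.lift ((Algebra.linearMap R Rp).comp f) with hfp'
  have hflift : ∀ m : M, fp (LocalizedModule.mkLinearMap P.primeCompl M m)
      = algebraMap R Rp (f m) := fun m => hb.lift_eq _ m
  have key : ∀ (u v : Mp), fp u • v = fp v • u := by
    intro u v
    have hu : u = b.repr u 0 • b 0 := by
      conv_lhs => rw [← b.sum_repr u]
      simp
    have hv : v = b.repr v 0 • b 0 := by
      conv_lhs => rw [← b.sum_repr v]
      simp
    rw [hu, hv]
    simp only [map_smul, smul_smul, smul_eq_mul]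
    congr 1; ring
  have := key (LocalizedModule.mkLinearMap P.primeCompl M x)
    (LocalizedModule.mkLinearMap P.primeCompl M y)
  rw [hflift, hflift, algebraMap_smul, algebraMap_smul] at this
  simpa using this

theorem line_bundle_invertible {R : Type u} {M : Type v} [CommRing R]
    [AddCommGroup M] [Module R M] [Module.Finite R M] [Module.Projective R M]
    (h : ∀ (k : Type u) [Field k] [Algebra R k], Module.finrank k (k ⊗[R] M) = 1) :
    Function.Bijective (contractRight R M) := by
  have hsurj : Function.Surjective (contractRight R M) := by
    rw [← LinearMap.range_eq_top]
    by_contra hne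
    obtain ⟨P, hPmax, hle⟩ := Ideal.exists_le_maximal _ hne
    letI : Field (R ⧸ P) := Ideal.Quotient.field P
    have h1 := h (R ⧸ P)
    -- show M = P • M
    obtain ⟨s, hs⟩ := ‹Module.Projective R M›.out
    have htop : (P • ⊤ : Submodule R M) = ⊤ := by
      rw [eq_top_iff]
      intro m _
      have hm : m = (s m).sum fun x r => r • x := by
        conv_lhs => rw [← hs m]
        simp [Finsupp.linearCombination, Finsupp.sum]
      rw [hm]
      apply Submodule.sum_mem
      intro x hx
      refine Submodule.smul_mem_smul ?_ Submodule.mem_top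
      apply hle
      exact ⟨m ⊗ₜ ((Finsupp.lapply x).comp s), by simp [contractRight_apply]⟩
    haveI hsub : Subsingleton ((R ⧸ P) ⊗[R] M) := by
      have e := TensorProduct.quotTensorEquivQuotSMul M P
      haveI : Subsingleton (M ⧸ (P • ⊤ : Submodule R M)) := by
        rw [Submodule.Quotient.subsingleton_iff]; exact htop
      exact e.toEquiv.subsingleton
    rw [Module.finrank_zero_of_subsingleton] at h1
    exact one_ne_zero h1.symm
  obtain ⟨u₀, hu₀⟩ := hsurj 1
  have helper : ∀ (u : M ⊗[R] Module.Dual R M) (m : M) (g : Module.Dual R M),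
      contractRight R M u • (m ⊗ₜ[R] g) = g m • u := by
    intro u m g
    induction u with
    | zero => simp
    | tmul y f =>
      have hd : f m • g = g m • f := by
        ext z
        have := congrArg f (line_bundle_key h g z m)
        simp only [map_smul, smul_eq_mul] at this
        rw [mul_comm] at this
        simp only [LinearMap.smul_apply, smul_eq_mul]
        exact this
      calc contractRight R M (y ⊗ₜ[R] f) • (m ⊗ₜ[R] g)
          = (f y • m) ⊗ₜ[R] g := by rw [contractRight_apply, smul_tmul']
        _ = (f m • y) ⊗ₜ[R] g := by rw [line_bundle_key h f y m]
        _ = y ⊗ₜ[R] (f m • g) := smul_tmul _ _ _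
        _ = y ⊗ₜ[R] (g m • f) := by rw [hd]
        _ = g m • (y ⊗ₜ[R] f) := tmul_smul _ _ _
    | add u v hu hv => rw [map_add, add_smul, hu, hv, smul_add]
  have hretr : ∀ t : M ⊗[R] Module.Dual R M, contractRight R M t • u₀ = t := by
    intro t
    induction t with
    | zero => simp
    | tmul m g => rw [contractRight_apply, ← helper u₀ m g, hu₀, one_smul]
    | add t s ht hs => rw [map_add, add_smul, ht, hs]
  refine ⟨fun a b hab => ?_, hsurj⟩
  rw [← hretr a, ← hretr b, hab]
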